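/- For each n, as polynomials in y, \sum_{\pi \in S_n} y^{inv(\pi)} evaluated via the substitution scheme gives: the coefficient of x^n in \sum_{m \ge 0} [m]_{x(y-1)+1}! x^m equals \sum_{k} f_{n,k} y^k where f_{n,k} = \sum_{i=k}^{n-2} (-1)^{i+k} \binom{i}{k} \sum_{j=i}^{\binom{n-i}{2}} \binom{j}{i} m_{n-i, j} (for n \ge 2). -/

import Mathlib

open Finset Polynomial

/-- The number of inversions of a permutation of `[n]`. -/
def invCount {n : ℕ} (π : Equiv.Perm (Fin n)) : ℕ :=
  (Finset.univ.filter fun p : Fin n × Fin n => p.1 < p.2 ∧ π p.2 < π p.1).card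

/-- The Mahonian number `m_{n,j}`. -/
noncomputable def mahonian (n j : ℕ) : ℕ :=
  Nat.card {π : Equiv.Perm (Fin n) // invCount π = j}

/-- The q-factorial `[m]_q!` as a polynomial over `ℤ`. -/
noncomputable def qFactorial (m : ℕ) : Polynomial ℤ :=
  ∏ i ∈ Finset.range m, ∑ j ∈ Finset.range (i + 1), Polynomial.X ^ j

noncomputable def xVar : MvPolynomial (Fin 2) ℤ := MvPolynomial.X 0
noncomputable def yVar : MvPolynomial (Fin 2) ℤ := MvPolynomial.X 1

/-- The Fishburn coefficient `f_{n,k}`: the coefficient of `x^n y^k` in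
`∑_{m ≥ 0} [m]_{x(y-1)+1}! x^m` (terms with `m > n` do not contribute to the
coefficient of `x^n`, so the sum may be truncated at `m = n`). -/
noncomputable def fishburnCoeff (n k : ℕ) : ℤ :=
  MvPolynomial.coeff (Finsupp.single 0 n + Finsupp.single 1 k)
    (∑ m ∈ Finset.range (n + 1),
      Polynomial.aeval (xVar * (yVar - 1) + 1) (qFactorial m) * xVar ^ m)

section Aux

open Equiv Equiv.Perm

lemma invCount_eq_sum {n : ℕ} (π : Equiv.Perm (Fin n)) :
    invCount π = ∑ a : Fin n, ∑ b : Fin n, if a < b ∧ π b < π a then 1 else 0 := by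
  rw [invCount, Finset.card_filter, Fintype.sum_prod_type]

/-- forward map of the Lehmer-type bijection -/
noncomputable def lehmerF {n : ℕ} (ve : Fin (n + 1) × Equiv.Perm (Fin n)) :
    Equiv.Perm (Fin (n + 1)) :=
  (Fin.cycleRange ve.1)⁻¹ * Equiv.Perm.decomposeFin.symm (0, ve.2)

lemma lehmerF_zero {n : ℕ} (v : Fin (n + 1)) (e : Equiv.Perm (Fin n)) :
    lehmerF (v, e) 0 = v := by
  simp [lehmerF, Equiv.Perm.mul_apply, Equiv.Perm.inv_def]

lemma lehmerF_succ {n : ℕ} (v : Fin (n + 1)) (e : Equiv.Perm (Fin n)) (i : Fin n) :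
    lehmerF (v, e) i.succ = v.succAbove (e i) := by
  simp [lehmerF, Equiv.Perm.mul_apply, Equiv.Perm.inv_def]

lemma lehmerF_bijective {n : ℕ} : Function.Bijective (lehmerF (n := n)) := by
  rw [Function.bijective_iff_has_inverse]
  refine ⟨fun π => (π 0, (Equiv.Perm.decomposeFin ((π 0).cycleRange * π)).2), ?_, ?_⟩
  · rintro ⟨v, e⟩
    have h0 : lehmerF (v, e) 0 = v := lehmerF_zero v e
    have h1 : (v.cycleRange) * lehmerF (v, e) = Equiv.Perm.decomposeFin.symm (0, e) := by
      rw [lehmerF, mul_inv_cancel_left]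
    simp [h0, h1]
  · intro π
    set v := π 0 with hv
    set ρ := v.cycleRange * π with hρ
    have h0 : ρ 0 = 0 := by
      simp [hρ, Equiv.Perm.mul_apply, ← hv, Fin.cycleRange_self]
    have hfst : (Equiv.Perm.decomposeFin ρ).1 = 0 := by
      have h2 : Equiv.Perm.decomposeFin.symm (Equiv.Perm.decomposeFin ρ) = ρ :=
        Equiv.symm_apply_apply _ _
      have h3 := Equiv.Perm.decomposeFin_symm_apply_zero
        (Equiv.Perm.decomposeFin ρ).1 (Equiv.Perm.decomposeFin ρ).2
      rw [← h0]
      conv_rhs => rw [← h2]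
      exact h3.symm
    have hpair : ((0 : Fin (n+1)), (Equiv.Perm.decomposeFin ρ).2) = Equiv.Perm.decomposeFin ρ := by
      rw [← hfst]
    show lehmerF (v, (Equiv.Perm.decomposeFin ρ).2) = π
    rw [lehmerF]
    simp only [hpair, Equiv.symm_apply_apply]
    rw [hρ, inv_mul_cancel_left]

lemma filter_range_lt_eq (v n : ℕ) (hv : v ≤ n) :
    (Finset.range n).filter (fun t => t < v) = Finset.range v := by
  ext t; simp only [Finset.mem_filter, Finset.mem_range]; omega

lemma sum_ite_lt {n : ℕ} (v : Fin (n + 1)) (e : Equiv.Perm (Fin n)) :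
    (∑ j : Fin n, if Fin.castSucc (e j) < v then 1 else 0) = (v : ℕ) := by
  have h1 : (∑ j : Fin n, if Fin.castSucc (e j) < v then 1 else 0)
      = ∑ w : Fin n, if Fin.castSucc w < v then 1 else 0 :=
    Equiv.sum_comp e (fun w => if Fin.castSucc w < v then 1 else 0)
  rw [h1]
  have h2 : ∀ w : Fin n, (Fin.castSucc w < v ↔ (w : ℕ) < (v : ℕ)) := by
    intro w; rw [Fin.lt_def]; simp
  simp only [h2]
  rw [Fin.sum_univ_eq_sum_range (fun t => if t < (v:ℕ) then 1 else 0) n]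
  rw [← Finset.card_filter, filter_range_lt_eq _ _ (by omega : (v:ℕ) ≤ n), Finset.card_range]

lemma invCount_lehmerF {n : ℕ} (v : Fin (n + 1)) (e : Equiv.Perm (Fin n)) :
    invCount (lehmerF (v, e)) = (v : ℕ) + invCount e := by
  rw [invCount_eq_sum, Fin.sum_univ_succ]
  congr 1
  · -- row a = 0
    rw [Fin.sum_univ_succ]
    simp only [lehmerF_zero, lehmerF_succ, lt_self_iff_false, false_and, if_false, zero_add]
    have : ∀ j : Fin n, ((0 : Fin (n+1)) < j.succ ∧ v.succAbove (e j) < v)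
        ↔ Fin.castSucc (e j) < v := by
      intro j
      constructor
      · rintro ⟨-, h⟩; rwa [Fin.succAbove_lt_iff_castSucc_lt] at h
      · intro h; exact ⟨Fin.succ_pos j, (Fin.succAbove_lt_iff_castSucc_lt v (e j)).2 h⟩
    simp only [this]
    exact sum_ite_lt v e
  · -- rows a = i.succ
    rw [invCount_eq_sum e]
    refine Finset.sum_congr rfl fun i _ => ?_
    rw [Fin.sum_univ_succ]
    simp only [lehmerF_zero, lehmerF_succ]
    have hz : ¬ (i.succ < (0 : Fin (n+1))) := by simp
    rw [if_neg (by exact fun h => hz h.1)]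
    rw [zero_add]
    refine Finset.sum_congr rfl fun j _ => ?_
    congr 1
    simp only [eq_iff_iff]
    rw [Fin.succ_lt_succ_iff, Fin.succAbove_lt_succAbove_iff]
noncomputable def invPoly (n : ℕ) : Polynomial ℤ :=
  ∑ π : Equiv.Perm (Fin n), Polynomial.X ^ invCount π

lemma invCount_of_subsingleton {n : ℕ} (hn : n ≤ 1) (π : Equiv.Perm (Fin n)) :
    invCount π = 0 := by
  rw [invCount, Finset.card_eq_zero, Finset.filter_eq_empty_iff]
  rintro ⟨a, b⟩ -
  have : a = b := by omega
  simp [this]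

lemma invPoly_succ (n : ℕ) :
    invPoly (n + 1) = (∑ j ∈ Finset.range (n + 1), Polynomial.X ^ j) * invPoly n := by
  have h := Fintype.sum_bijective lehmerF (lehmerF_bijective (n := n))
    (fun ve => (Polynomial.X : Polynomial ℤ) ^ invCount (lehmerF ve))
    (fun π => (Polynomial.X : Polynomial ℤ) ^ invCount π) (fun ve => rfl)
  rw [invPoly, ← h, Fintype.sum_prod_type, Finset.sum_mul,
    ← Fin.sum_univ_eq_sum_range (fun j => (Polynomial.X : Polynomial ℤ) ^ j * invPoly n) (n+1)]
  refine Finset.sum_congr rfl fun v _ => ?_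
  rw [invPoly, Finset.mul_sum]
  refine Finset.sum_congr rfl fun e _ => ?_
  rw [invCount_lehmerF, pow_add]

lemma qFactorial_eq_invPoly (n : ℕ) : qFactorial n = invPoly n := by
  induction n with
  | zero =>
    rw [qFactorial, invPoly]
    rw [Finset.range_zero, Finset.prod_empty]
    have h1 : ∀ π : Equiv.Perm (Fin 0), (Polynomial.X : Polynomial ℤ) ^ invCount π = 1 :=
      fun π => by rw [invCount_of_subsingleton (by omega), pow_zero]
    simp only [h1]
    rw [Finset.sum_const, Finset.card_univ]
    simp [Fintype.card_perm]
  | succ n ih =>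
    rw [qFactorial, Finset.prod_range_succ, ← qFactorial, ih, invPoly_succ, mul_comm]

lemma coeff_invPoly (m j : ℕ) :
    (invPoly m).coeff j = (mahonian m j : ℤ) := by
  rw [invPoly, Polynomial.finset_sum_coeff]
  simp only [Polynomial.coeff_X_pow]
  have : ∀ π : Equiv.Perm (Fin m), (if j = invCount π then (1:ℤ) else 0)
      = (if invCount π = j then (1:ℤ) else 0) := fun π => by simp [eq_comm]
  simp only [this]
  rw [Finset.sum_boole]
  congr 1
  rw [mahonian, Nat.card_eq_fintype_card, Fintype.card_subtype]

lemma card_pairs (m : ℕ) :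
    (Finset.univ.filter fun p : Fin m × Fin m => p.1 < p.2).card = m.choose 2 := by
  rw [Finset.card_filter, Fintype.sum_prod_type]
  have h1 : ∀ a : Fin m, (∑ b : Fin m, if a < b then 1 else 0) = m - 1 - (a : ℕ) := by
    intro a
    rw [← Finset.card_filter]
    have : Finset.univ.filter (fun b : Fin m => a < b) = Finset.Ioi a := by
      ext b; simp
    rw [this, Fin.card_Ioi]
  simp only [h1]
  rw [Fin.sum_univ_eq_sum_range (fun a => m - 1 - a) m,
    Finset.sum_range_reflect (fun a => a) m, Finset.sum_range_id, Nat.choose_two_right]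

lemma invCount_le {m : ℕ} (π : Equiv.Perm (Fin m)) : invCount π ≤ m.choose 2 := by
  rw [← card_pairs m, invCount]
  exact Finset.card_le_card (Finset.monotone_filter_right _ (fun p _ hp => hp.1))
lemma inner_sum_eq (M i : ℕ) :
    (∑ π : Equiv.Perm (Fin M), ((invCount π).choose i : ℤ))
      = ∑ j ∈ Finset.Icc i (M.choose 2), (j.choose i : ℤ) * (mahonian M j : ℤ) := by
  have h1 : (∑ π : Equiv.Perm (Fin M), ((invCount π).choose i : ℤ))
      = ∑ j ∈ Finset.range (M.choose 2 + 1),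
          ∑ π ∈ Finset.univ.filter (fun π : Equiv.Perm (Fin M) => invCount π = j),
            ((invCount π).choose i : ℤ) :=
    (Finset.sum_fiberwise_of_maps_to (fun π _ =>
      Finset.mem_range.2 (Nat.lt_succ_of_le (invCount_le π))) _).symm
  rw [h1]
  have h2 : ∀ j, (∑ π ∈ Finset.univ.filter (fun π : Equiv.Perm (Fin M) => invCount π = j),
      ((invCount π).choose i : ℤ)) = (j.choose i : ℤ) * (mahonian M j : ℤ) := by
    intro j
    rw [Finset.sum_congr rfl (fun π hπ => by
      rw [(Finset.mem_filter.1 hπ).2] : ∀ π ∈ _, ((invCount π).choose i : ℤ) = (j.choose i : ℤ))]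
    rw [Finset.sum_const, nsmul_eq_mul, mul_comm]
    congr 2
    rw [mahonian, Nat.card_eq_fintype_card, Fintype.card_subtype]
  simp only [h2]
  rw [← Finset.sum_subset (fun j hj => Finset.mem_range.2 (Nat.lt_succ_of_le (Finset.mem_Icc.1 hj).2)) ?hz]
  case hz =>
    intro j hj hj2
    rw [Finset.mem_range] at hj
    rw [Finset.mem_Icc, not_and_or] at hj2
    have hji : j < i := by omega
    rw [Nat.choose_eq_zero_of_lt hji]
    simp
lemma single_add_single_eq_iff (a b c d : ℕ) :
    Finsupp.single (0 : Fin 2) a + Finsupp.single 1 b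
      = Finsupp.single (0 : Fin 2) c + Finsupp.single 1 d ↔ a = c ∧ b = d := by
  constructor
  · intro h
    have h0 := DFunLike.congr_fun h 0
    have h1 := DFunLike.congr_fun h 1
    simp [Finsupp.single_apply, Fin.ext_iff] at h0 h1
    omega
  · rintro ⟨rfl, rfl⟩; rfl

lemma coeff_xy (n k a b : ℕ) :
    MvPolynomial.coeff (Finsupp.single 0 n + Finsupp.single 1 k) (xVar ^ a * yVar ^ b)
      = if a = n ∧ b = k then (1 : ℤ) else 0 := by
  rw [xVar, yVar, MvPolynomial.X_pow_eq_monomial, MvPolynomial.X_pow_eq_monomial,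
    MvPolynomial.monomial_mul, mul_one, MvPolynomial.coeff_monomial]
  exact if_congr (single_add_single_eq_iff a b n k) rfl rfl

lemma key_coeff (n k m J : ℕ) (hm : m ≤ n) :
    MvPolynomial.coeff (Finsupp.single 0 n + Finsupp.single 1 k)
      ((xVar * (yVar - 1) + 1) ^ J * xVar ^ m)
    = ((-1 : ℤ)) ^ ((n - m) - k) * (J.choose (n - m) : ℤ) * ((n - m).choose k : ℤ) := by
  have h1 : (xVar * (yVar - 1) + 1 : MvPolynomial (Fin 2) ℤ) ^ J * xVar ^ m
      = ∑ i ∈ Finset.range (J + 1), ∑ t ∈ Finset.range (i + 1),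
          MvPolynomial.C ((-1 : ℤ) ^ (i - t) * (J.choose i : ℤ) * (i.choose t : ℤ))
            * (xVar ^ (i + m) * yVar ^ t) := by
    rw [add_pow, Finset.sum_mul]
    refine Finset.sum_congr rfl fun i hi => ?_
    have h2 : (yVar - 1 : MvPolynomial (Fin 2) ℤ) ^ i
        = ∑ t ∈ Finset.range (i + 1),
            yVar ^ t * (-1 : MvPolynomial (Fin 2) ℤ) ^ (i - t)
              * ((i.choose t : ℕ) : MvPolynomial (Fin 2) ℤ) := by
      rw [sub_eq_add_neg, add_pow]
    rw [one_pow, mul_pow, h2, Finset.mul_sum, Finset.sum_mul, Finset.sum_mul,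
      Finset.sum_mul]
    refine Finset.sum_congr rfl fun t ht => ?_
    simp only [map_mul, map_pow, map_neg, map_one, MvPolynomial.C_eq_coe_nat, pow_add]
    ring
  rw [h1, MvPolynomial.coeff_sum]
  simp only [MvPolynomial.coeff_sum, MvPolynomial.coeff_C_mul, coeff_xy]
  rw [Finset.sum_eq_single (n - m) ?h0 ?h1]
  case h0 =>
    intro i _ hne
    refine Finset.sum_eq_zero fun t _ => ?_
    rw [if_neg fun h => hne (by omega), mul_zero]
  case h1 =>
    intro hnm
    rw [Finset.mem_range, not_lt] at hnm
    refine Finset.sum_eq_zero fun t _ => ?_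
    rw [Nat.choose_eq_zero_of_lt (show J < n - m by omega)]
    simp
  · have h4 : ∀ t : ℕ, ((n - m + m = n ∧ t = k)) = (t = k) := fun t =>
      propext ⟨fun h => h.2, fun h => ⟨by omega, h⟩⟩
    simp only [h4, mul_ite, mul_one, mul_zero]
    rw [Finset.sum_ite_eq' (Finset.range (n - m + 1)) k]
    by_cases hk : k ∈ Finset.range (n - m + 1)
    · rw [if_pos hk]
    · rw [if_neg hk]
      rw [Finset.mem_range, not_lt] at hk
      rw [Nat.choose_eq_zero_of_lt (show n - m < k by omega)]
      ring

end Aux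

/-- `f_{n,k} = ∑_{i=k}^{n-2} (-1)^{i+k} C(i,k) ∑_{j=i}^{C(n-i,2)} C(j,i) m_{n-i,j}`
for `n ≥ 2`. -/
theorem fishburnCoeff_eq (n k : ℕ) (hn : 2 ≤ n) :
    fishburnCoeff n k =
      ∑ i ∈ Finset.Icc k (n - 2), (-1 : ℤ) ^ (i + k) * (i.choose k : ℤ) *
        ∑ j ∈ Finset.Icc i ((n - i).choose 2), (j.choose i : ℤ) * (mahonian (n - i) j : ℤ) := by
  have step1 : fishburnCoeff n k = ∑ m ∈ Finset.range (n + 1),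
      ((-1 : ℤ) ^ ((n - m) - k) * ((n - m).choose k : ℤ))
        * ∑ π : Equiv.Perm (Fin m), ((invCount π).choose (n - m) : ℤ) := by
    rw [fishburnCoeff, MvPolynomial.coeff_sum]
    refine Finset.sum_congr rfl fun m hm => ?_
    rw [Finset.mem_range] at hm
    have hm' : m ≤ n := by omega
    rw [qFactorial_eq_invPoly, invPoly, map_sum, Finset.sum_mul, MvPolynomial.coeff_sum,
      Finset.mul_sum]
    refine Finset.sum_congr rfl fun π _ => ?_
    rw [map_pow, Polynomial.aeval_X, key_coeff n k m _ hm']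
    ring
  have step2 : fishburnCoeff n k = ∑ i ∈ Finset.range (n + 1),
      ((-1 : ℤ) ^ (i - k) * (i.choose k : ℤ))
        * ∑ j ∈ Finset.Icc i ((n - i).choose 2), (j.choose i : ℤ) * (mahonian (n - i) j : ℤ) := by
    rw [step1, ← Finset.sum_range_reflect]
    refine Finset.sum_congr rfl fun i hi => ?_
    rw [Finset.mem_range] at hi
    have h1 : n + 1 - 1 - i = n - i := by omega
    rw [h1]
    have h2 : n - (n - i) = i := by omega
    rw [h2, inner_sum_eq]
  rw [step2]
  have hsub : Finset.Icc k (n - 2) ⊆ Finset.range (n + 1) := fun i hi =>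
    Finset.mem_range.2 (by have := (Finset.mem_Icc.1 hi).2; omega)
  have hzero : ∀ i ∈ Finset.range (n + 1), i ∉ Finset.Icc k (n - 2) →
      ((-1 : ℤ) ^ (i - k) * (i.choose k : ℤ)
        * ∑ j ∈ Finset.Icc i ((n - i).choose 2), (j.choose i : ℤ) * (mahonian (n - i) j : ℤ))
          = 0 := by
    intro i hi hni
    rw [Finset.mem_range] at hi
    rw [Finset.mem_Icc, not_and_or] at hni
    by_cases hik : i < k
    · rw [Nat.choose_eq_zero_of_lt hik]
      simp
    · have h3 : n - 2 < i := by omega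
      have h4 : (n - i).choose 2 = 0 := Nat.choose_eq_zero_of_lt (by omega)
      rw [h4, Finset.Icc_eq_empty (by omega : ¬ i ≤ 0), Finset.sum_empty, mul_zero]
  rw [← Finset.sum_subset hsub hzero]
  refine Finset.sum_congr rfl fun i hi => ?_
  rw [Finset.mem_Icc] at hi
  have h5 : i + k = (i - k) + 2 * k := by omega
  rw [h5, pow_add, pow_mul, neg_one_sq, one_pow, mul_one]
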